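/- Fix a real Δ > 5 and vertices x, y ∈ V; set D_{−1} = 0 and D_i = W(x, y) · ∑_{j=0}^{i} Δ^j for i ≥ 0. Let 0 ≤ i ≤ k−1 with A_i ≠ ∅, and suppose d_G(x, y) ≤ D_i and d_H(x, p_i(x)) ≤ (3Δ/(Δ−5)) · D_{i−1}. Let m = max{Δ · D_{i−1}, d_G(x, y)}. Then at least one of the following holds: (1) d_H(x, y) ≤ (3 + 16/(Δ−5)) · m; or (2) A_{i+1} ≠ ∅ and d_H(x, p_{i+1}(x)) ≤ (4Δ/(Δ−5)) · D_i. -/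

import Mathlib

open scoped ENNReal Classical

namespace ASP

variable {V : Type*}

noncomputable def wWeight {G : SimpleGraph V} (w : V → V → ℝ≥0∞) {x y : V}
    (p : G.Walk x y) : ℝ≥0∞ :=
  (p.darts.map fun d => w d.toProd.1 d.toProd.2).sum

noncomputable def gdist (G : SimpleGraph V) (w : V → V → ℝ≥0∞) (x y : V) : ℝ≥0∞ :=
  ⨅ p : G.Walk x y, wWeight w p

noncomputable def maxW {G : SimpleGraph V} (w : V → V → ℝ≥0∞) {x y : V}
    (p : G.Walk x y) : ℝ≥0∞ :=
  (p.darts.map fun d => w d.toProd.1 d.toProd.2).foldr max 0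

lemma gdist_le {G : SimpleGraph V} (w : V → V → ℝ≥0∞) {x y : V} (p : G.Walk x y) :
    gdist G w x y ≤ wWeight w p := iInf_le _ p

@[simp] lemma gdist_self {G : SimpleGraph V} (w : V → V → ℝ≥0∞) (x : V) :
    gdist G w x x = 0 :=
  le_antisymm (by simpa [wWeight] using gdist_le w (SimpleGraph.Walk.nil : G.Walk x x))
    (zero_le)

lemma wWeight_append {G : SimpleGraph V} (w : V → V → ℝ≥0∞) {x y z : V}
    (p : G.Walk x y) (q : G.Walk y z) :
    wWeight w (p.append q) = wWeight w p + wWeight w q := by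
  simp [wWeight, SimpleGraph.Walk.darts_append]

lemma gdist_triangle (G : SimpleGraph V) (w : V → V → ℝ≥0∞) (x y z : V) :
    gdist G w x z ≤ gdist G w x y + gdist G w y z := by
  have h1 : gdist G w x y + gdist G w y z = ⨅ p : G.Walk x y, ⨅ q : G.Walk y z,
      (wWeight w p + wWeight w q) := by
    rw [gdist, gdist, ENNReal.iInf_add]
    exact iInf_congr fun p => ENNReal.add_iInf
  rw [h1]
  refine le_iInf fun p => le_iInf fun q => ?_
  rw [← wWeight_append]
  exact gdist_le w _

lemma wWeight_reverse {G : SimpleGraph V} (w : V → V → ℝ≥0∞)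
    (hw : ∀ u v, G.Adj u v → w u v = w v u) {x y : V} (p : G.Walk x y) :
    wWeight w p.reverse = wWeight w p := by
  rw [wWeight, wWeight, SimpleGraph.Walk.darts_reverse, List.map_reverse, List.sum_reverse,
    List.map_map]
  congr 1
  refine List.map_congr_left fun d hd => ?_
  exact (hw _ _ d.adj).symm

lemma gdist_comm {G : SimpleGraph V} (w : V → V → ℝ≥0∞)
    (hw : ∀ u v, G.Adj u v → w u v = w v u) (x y : V) :
    gdist G w x y = gdist G w y x := by
  have h : ∀ a b : V, gdist G w a b ≤ gdist G w b a := by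
    intro a b
    refine le_iInf fun p => ?_
    rw [← wWeight_reverse w hw p]
    exact gdist_le w _
  exact le_antisymm (h x y) (h y x)

lemma wWeight_transfer {G H : SimpleGraph V} (w : V → V → ℝ≥0∞) {x y : V}
    (p : G.Walk x y) (hp : ∀ e ∈ p.edges, e ∈ H.edgeSet) :
    wWeight w (p.transfer H hp) = wWeight w p := by
  induction p with
  | nil => simp [wWeight]
  | cons h q ih =>
    simp only [SimpleGraph.Walk.transfer, wWeight, SimpleGraph.Walk.darts_cons, List.map_cons,
      List.sum_cons] at *
    exact congrArg (w _ _ + ·) (ih _)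

lemma gdist_anti {G H : SimpleGraph V} (hle : H ≤ G) (w : V → V → ℝ≥0∞) (x y : V) :
    gdist G w x y ≤ gdist H w x y := by
  refine le_iInf fun p => ?_
  have hp : ∀ e ∈ p.edges, e ∈ G.edgeSet := by
    intro e he
    have := p.edges_subset_edgeSet he
    induction e with
    | _ a b => exact hle this
  rw [← wWeight_transfer w p hp]
  exact gdist_le w _


/-- The half-bunch of a vertex `u` of level `i`: all vertices of `A i` closer to `u` than half
the distance from `u` to `A (i+1)` (vacuously all of `A i` if `A (i+1) = ∅`), together with the
pivots of all nonempty higher levels. -/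
def halfBunch (G : SimpleGraph V) (w : V → V → ℝ≥0∞) (A : ℕ → Set V) (pv : ℕ → V → V)
    (k i : ℕ) (u : V) : Set V :=
  {v | v ∈ A i ∧ ∀ a ∈ A (i + 1), gdist G w u v < gdist G w u a / 2} ∪
    {v | ∃ j, i < j ∧ j < k ∧ (A j).Nonempty ∧ v = pv j u}

/-- The spanner `H`: the subgraph of `G` which is the union of the fixed shortest paths `P u v`
over all `u ∈ A i \ A (i+1)` and `v` in the half-bunch of `u`. -/
def spanGraph (G : SimpleGraph V) (w : V → V → ℝ≥0∞) (A : ℕ → Set V) (pv : ℕ → V → V)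
    (k : ℕ) (P : ∀ u v : V, G.Walk u v) : SimpleGraph V where
  Adj a b := ∃ u v i, u ∈ A i ∧ u ∉ A (i + 1) ∧ v ∈ halfBunch G w A pv k i u ∧
      s(a, b) ∈ (P u v).edges
  symm := by
    constructor
    rintro a b ⟨u, v, i, h1, h2, h3, he⟩
    exact ⟨u, v, i, h1, h2, h3, by rwa [Sym2.eq_swap] at he⟩
  loopless := by
    constructor
    rintro a ⟨u, v, i, _, _, _, he⟩
    exact ((P u v).adj_of_mem_edges he).ne rfl


section Structure

variable {G : SimpleGraph V} {w : V → V → ℝ≥0∞} {k : ℕ} {A : ℕ → Set V} {pv : ℕ → V → V}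
  {P : ∀ u v : V, G.Walk u v}

lemma Amono (hAnest : ∀ i, A (i + 1) ⊆ A i) : ∀ {m n : ℕ}, m ≤ n → A n ⊆ A m := by
  intro m n hmn
  induction hmn with
  | refl => exact le_refl _
  | step _ ih => exact (hAnest _).trans ih

lemma nonempty_lt_k (hAnest : ∀ i, A (i + 1) ⊆ A i) (hAk : A k = ∅) {m : ℕ}
    (h : (A m).Nonempty) : m < k := by
  by_contra hc
  obtain ⟨v, hv⟩ := h
  exact absurd (Amono hAnest (not_lt.1 hc) hv) (by simp [hAk])

lemma exists_lev (hk : 1 ≤ k) (hA0 : A 0 = Set.univ) (hAnest : ∀ i, A (i + 1) ⊆ A i)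
    (hAk : A k = ∅) (v : V) :
    ∃ n : ℕ, v ∈ A n ∧ v ∉ A (n + 1) ∧ ∀ m, v ∈ A m → m ≤ n := by
  have hex : ∃ m, v ∉ A (m + 1) := ⟨k - 1, by
    have h1 : k - 1 + 1 = k := by omega
    rw [h1, hAk]; exact not_false⟩
  classical
  refine ⟨Nat.find hex, ?_, Nat.find_spec hex, ?_⟩
  · rcases Nat.eq_zero_or_eq_succ_pred (Nat.find hex) with h0 | hs
    · rw [h0, hA0]; trivial
    · rw [hs]
      have := Nat.find_min hex (m := Nat.find hex - 1) (by omega)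
      simpa [Nat.succ_eq_add_one] using not_not.1 this
  · intro m hm
    by_contra hc
    exact Nat.find_spec hex (Amono hAnest (by omega) hm)

lemma span_le : spanGraph G w A pv k P ≤ G := by
  rintro a b ⟨u, v, i, _, _, _, he⟩
  exact (P u v).adj_of_mem_edges he

lemma wsym_span (hwsym : ∀ u v, G.Adj u v → w u v = w v u) :
    ∀ u v, (spanGraph G w A pv k P).Adj u v → w u v = w v u :=
  fun u v h => hwsym u v (span_le h)

/-- If `v` is in the half-bunch of `u`, then the `H`-distance matches the `G`-distance bound. -/
lemma gdist_span_le
    (hP : ∀ u v i, u ∈ A i → u ∉ A (i + 1) → v ∈ halfBunch G w A pv k i u →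
      (P u v).IsPath ∧ wWeight w (P u v) = gdist G w u v)
    {u v : V} {n : ℕ} (hu : u ∈ A n) (hu' : u ∉ A (n + 1))
    (hv : v ∈ halfBunch G w A pv k n u) :
    gdist (spanGraph G w A pv k P) w u v ≤ gdist G w u v := by
  obtain ⟨-, hwt⟩ := hP u v n hu hu' hv
  have hedges : ∀ e ∈ (P u v).edges, e ∈ (spanGraph G w A pv k P).edgeSet := by
    intro e he
    induction e with
    | _ a b => exact ⟨u, v, n, hu, hu', hv, he⟩
  calc gdist (spanGraph G w A pv k P) w u v ≤ wWeight w ((P u v).transfer _ hedges) :=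
        gdist_le w _
    _ = wWeight w (P u v) := wWeight_transfer w _ _
    _ = gdist G w u v := hwt

end Structure

lemma claimZ {G : SimpleGraph V} {w : V → V → ℝ≥0∞} {k : ℕ} {A : ℕ → Set V} {pv : ℕ → V → V}
    {P : ∀ u v : V, G.Walk u v}
    (hwsym : ∀ u v, G.Adj u v → w u v = w v u)
    (hk : 1 ≤ k) (hA0 : A 0 = Set.univ)
    (hAnest : ∀ i, A (i + 1) ⊆ A i) (hAk : A k = ∅)
    (hpv : ∀ i, i < k → ∀ v : V, (A i).Nonempty →
      pv i v ∈ A i ∧ ∀ a ∈ A i, gdist G w v (pv i v) ≤ gdist G w v a)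
    (hP : ∀ u v i, u ∈ A i → u ∉ A (i + 1) → v ∈ halfBunch G w A pv k i u →
      (P u v).IsPath ∧ wWeight w (P u v) = gdist G w u v) :
    ∀ (t n : ℕ) (s s' : V), k ≤ n + t → s ∈ A n → s' ∈ A n → gdist G w s s' = 0 →
      gdist (spanGraph G w A pv k P) w s s' = 0 := by
  have hsymG : ∀ a b : V, gdist G w a b = gdist G w b a := fun a b => gdist_comm w hwsym a b
  have hsymH : ∀ a b : V, gdist (spanGraph G w A pv k P) w a b =
      gdist (spanGraph G w A pv k P) w b a :=
    fun a b => gdist_comm w (wsym_span hwsym) a b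
  intro t
  induction t with
  | zero =>
    intro n s s' hkn hs _ _
    have : s ∈ A k := Amono hAnest (by omega) hs
    simp [hAk] at this
  | succ t IH =>
    have step : ∀ (n : ℕ) (s s' : V) (ls ls' : ℕ), k ≤ n + (t + 1) → n ≤ ls →
        s ∈ A ls → s ∉ A (ls + 1) → s' ∈ A ls' → s' ∉ A (ls' + 1) → ls ≤ ls' →
        gdist G w s s' = 0 → gdist (spanGraph G w A pv k P) w s s' = 0 := by
      intro n s s' ls ls' hkn hnls hsl hsl1 hs'l hs'l1 hle hd
      have hs'ls : s' ∈ A ls := Amono hAnest hle hs'l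
      by_cases hcase : ∀ a ∈ A (ls + 1), gdist G w s a ≠ 0
      · have hmem : s' ∈ halfBunch G w A pv k ls s :=
          Or.inl ⟨hs'ls, fun a ha => by
            rw [hd]; exact ENNReal.div_pos (hcase a ha) (by norm_num)⟩
        exact le_antisymm ((gdist_span_le hP hsl hsl1 hmem).trans hd.le) (zero_le)
      · push_neg at hcase
        obtain ⟨a, ha, ha0⟩ := hcase
        have hne : (A (ls + 1)).Nonempty := ⟨a, ha⟩
        have hltk : ls + 1 < k := nonempty_lt_k hAnest hAk hne
        obtain ⟨hzA, hzmin⟩ := hpv (ls + 1) hltk s hne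
        have hdz : gdist G w s (pv (ls + 1) s) = 0 :=
          le_antisymm ((hzmin a ha).trans ha0.le) (zero_le)
        have hHz : gdist (spanGraph G w A pv k P) w s (pv (ls + 1) s) = 0 :=
          le_antisymm ((gdist_span_le hP hsl hsl1
            (Or.inr ⟨ls + 1, Nat.lt_succ_self ls, hltk, hne, rfl⟩)).trans hdz.le) (zero_le)
        have hdzs' : gdist G w (pv (ls + 1) s) s' = 0 := by
          have h1 := gdist_triangle G w (pv (ls + 1) s) s s'
          rw [hsymG (pv (ls + 1) s) s, hdz, hd, add_zero] at h1
          exact le_antisymm h1 (zero_le)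
        by_cases hls' : ls + 1 ≤ ls'
        · have hz' : gdist (spanGraph G w A pv k P) w (pv (ls + 1) s) s' = 0 :=
            IH (ls + 1) (pv (ls + 1) s) s' (by omega) hzA (Amono hAnest hls' hs'l) hdzs'
          have h1 := gdist_triangle (spanGraph G w A pv k P) w s (pv (ls + 1) s) s'
          rw [hHz, hz', add_zero] at h1
          exact le_antisymm h1 (zero_le)
        · have heq : ls' = ls := by omega
          subst heq
          have hds'z : gdist G w s' (pv (ls' + 1) s) = 0 := by
            rw [hsymG]; exact hdzs'
          by_cases hcase' : ∀ b ∈ A (ls' + 1), gdist G w s' b ≠ 0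
          · have hzls' : pv (ls' + 1) s ∈ A ls' := hAnest _ hzA
            have hmem : pv (ls' + 1) s ∈ halfBunch G w A pv k ls' s' :=
              Or.inl ⟨hzls', fun b hb => by
                rw [hds'z]; exact ENNReal.div_pos (hcase' b hb) (by norm_num)⟩
            have hHz2 : gdist (spanGraph G w A pv k P) w s' (pv (ls' + 1) s) = 0 :=
              le_antisymm ((gdist_span_le hP hs'l hs'l1 hmem).trans hds'z.le) (zero_le)
            have h1 := gdist_triangle (spanGraph G w A pv k P) w s (pv (ls' + 1) s) s'
            rw [hHz, hsymH (pv (ls' + 1) s) s', hHz2, add_zero] at h1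
            exact le_antisymm h1 (zero_le)
          · push_neg at hcase'
            obtain ⟨b, hb, hb0⟩ := hcase'
            obtain ⟨hz'A, hz'min⟩ := hpv (ls' + 1) hltk s' hne
            have hdz'2 : gdist G w s' (pv (ls' + 1) s') = 0 :=
              le_antisymm ((hz'min b hb).trans hb0.le) (zero_le)
            have hHz' : gdist (spanGraph G w A pv k P) w s' (pv (ls' + 1) s') = 0 :=
              le_antisymm ((gdist_span_le hP hs'l hs'l1
                (Or.inr ⟨ls' + 1, Nat.lt_succ_self ls', hltk, hne, rfl⟩)).trans hdz'2.le)
                (zero_le)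
            have hdzz' : gdist G w (pv (ls' + 1) s) (pv (ls' + 1) s') = 0 := by
              have h1 := gdist_triangle G w (pv (ls' + 1) s) s' (pv (ls' + 1) s')
              rw [hdzs', hdz'2, add_zero] at h1
              exact le_antisymm h1 (zero_le)
            have hH3 : gdist (spanGraph G w A pv k P) w (pv (ls' + 1) s) (pv (ls' + 1) s') = 0 :=
              IH (ls' + 1) (pv (ls' + 1) s) (pv (ls' + 1) s') (by omega) hzA hz'A hdzz'
            have h1 := gdist_triangle (spanGraph G w A pv k P) w s (pv (ls' + 1) s) s'
            have h2 := gdist_triangle (spanGraph G w A pv k P) w (pv (ls' + 1) s)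
              (pv (ls' + 1) s') s'
            rw [hsymH (pv (ls' + 1) s') s', hHz', hH3, add_zero] at h2
            rw [hHz, zero_add] at h1
            exact le_antisymm (h1.trans h2) (zero_le)
    intro n s s' hkn hs hs' hd
    obtain ⟨ls, hsl, hsl1, hmax⟩ := exists_lev hk hA0 hAnest hAk s
    obtain ⟨ls', hs'l, hs'l1, hmax'⟩ := exists_lev hk hA0 hAnest hAk s'
    rcases le_total ls ls' with h | h
    · exact step n s s' ls ls' hkn (hmax n hs) hsl hsl1 hs'l hs'l1 h hd
    · rw [hsymH]
      exact step n s' s ls' ls hkn (hmax' n hs') hs'l hs'l1 hsl hsl1 h (by rw [hsymG]; exact hd)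


lemma arith1 {Δ : ℝ} (hΔ : 5 < Δ) (D' dxy : ℝ≥0∞) :
    4 * (ENNReal.ofReal (3 * Δ / (Δ - 5)) * D') + 3 * dxy ≤
      ENNReal.ofReal (3 + 16 / (Δ - 5)) * max (ENNReal.ofReal Δ * D') dxy := by
  have h5 : (0:ℝ) < Δ - 5 := by linarith
  have h4 : (4:ℝ≥0∞) = ENNReal.ofReal (4:ℝ) := by simp
  have h3 : (3:ℝ≥0∞) = ENNReal.ofReal (3:ℝ) := by simp
  calc 4 * (ENNReal.ofReal (3 * Δ / (Δ - 5)) * D') + 3 * dxy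
      = ENNReal.ofReal (12 / (Δ - 5)) * (ENNReal.ofReal Δ * D') +
        ENNReal.ofReal 3 * dxy := by
        rw [← mul_assoc, ← mul_assoc, h4, h3, ← ENNReal.ofReal_mul (by norm_num),
          ← ENNReal.ofReal_mul (by positivity)]
        congr 2
        field_simp
        ring
    _ ≤ ENNReal.ofReal (12 / (Δ - 5)) * max (ENNReal.ofReal Δ * D') dxy +
        ENNReal.ofReal 3 * max (ENNReal.ofReal Δ * D') dxy := by
        gcongr
        · exact le_max_left _ _
        · exact le_max_right _ _
    _ = ENNReal.ofReal (3 + 12 / (Δ - 5)) * max (ENNReal.ofReal Δ * D') dxy := by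
        rw [ENNReal.ofReal_add (by norm_num) (by positivity), add_mul, add_comm]
    _ ≤ ENNReal.ofReal (3 + 16 / (Δ - 5)) * max (ENNReal.ofReal Δ * D') dxy := by
        gcongr
        norm_num

lemma arith2 {Δ : ℝ} (hΔ : 5 < Δ) {D' Di dxy : ℝ≥0∞}
    (h1 : ENNReal.ofReal Δ * D' ≤ Di) (h2 : dxy ≤ Di) :
    5 * (ENNReal.ofReal (3 * Δ / (Δ - 5)) * D') + 4 * dxy ≤
      ENNReal.ofReal (4 * Δ / (Δ - 5)) * Di := by
  have h5 : (0:ℝ) < Δ - 5 := by linarith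
  have h4 : (4:ℝ≥0∞) = ENNReal.ofReal (4:ℝ) := by simp
  have h5' : (5:ℝ≥0∞) = ENNReal.ofReal (5:ℝ) := by simp
  calc 5 * (ENNReal.ofReal (3 * Δ / (Δ - 5)) * D') + 4 * dxy
      = ENNReal.ofReal (15 / (Δ - 5)) * (ENNReal.ofReal Δ * D') +
        ENNReal.ofReal 4 * dxy := by
        rw [← mul_assoc, ← mul_assoc, h4, h5', ← ENNReal.ofReal_mul (by norm_num),
          ← ENNReal.ofReal_mul (by positivity)]
        congr 2
        field_simp
        ring
    _ ≤ ENNReal.ofReal (15 / (Δ - 5)) * Di + ENNReal.ofReal 4 * Di := by gcongr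
    _ = ENNReal.ofReal (4 + 15 / (Δ - 5)) * Di := by
        rw [ENNReal.ofReal_add (by norm_num) (by positivity), add_mul, add_comm]
    _ ≤ ENNReal.ofReal (4 * Δ / (Δ - 5)) * Di := by
        gcongr
        rw [← sub_nonneg]
        have he : 4 * Δ / (Δ - 5) - (4 + 15 / (Δ - 5)) = 5 / (Δ - 5) := by
          field_simp
          ring
        rw [he]
        positivity

lemma geom_step {Δ : ℝ} (hΔ : 5 < Δ) (Wxy : ℝ≥0∞) (i : ℕ) :
    ENNReal.ofReal Δ * (Wxy * ENNReal.ofReal (∑ j ∈ Finset.range i, Δ ^ j)) ≤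
      Wxy * ENNReal.ofReal (∑ j ∈ Finset.range (i + 1), Δ ^ j) := by
  have hΔ0 : (0:ℝ) ≤ Δ := by linarith
  rw [← mul_assoc, mul_comm (ENNReal.ofReal Δ) Wxy, mul_assoc,
    ← ENNReal.ofReal_mul hΔ0]
  refine mul_le_mul_right (ENNReal.ofReal_le_ofReal ?_) _
  rw [geom_sum_succ]
  nlinarith [Finset.sum_nonneg (fun j (_ : j ∈ Finset.range i) => pow_nonneg hΔ0 j)]

/-- Lemma D.4: with `D_{-1} = 0`, `D_i = W(x,y)·∑_{j=0}^{i} Δ^j` and `Δ > 5`, if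
`d_G(x,y) ≤ D_i` and `d_H(x,p_i(x)) ≤ (3Δ/(Δ-5))·D_{i-1}`, then with
`m = max{Δ·D_{i-1}, d_G(x,y)}`, either `d_H(x,y) ≤ (3 + 16/(Δ-5))·m`, or `A_{i+1} ≠ ∅` and
`d_H(x,p_{i+1}(x)) ≤ (4Δ/(Δ-5))·D_i`.  (Here `∑ j ∈ Finset.range i, Δ^j` is `D_{i-1}/W(x,y)`.) -/
theorem statement13 [Fintype V] (G : SimpleGraph V) (hconn : G.Connected)
    (w : V → V → ℝ≥0∞) (hwsym : ∀ u v, G.Adj u v → w u v = w v u)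
    (hwfin : ∀ u v, G.Adj u v → w u v ≠ ⊤)
    (k : ℕ) (hk : 1 ≤ k) (A : ℕ → Set V) (hA0 : A 0 = Set.univ)
    (hAnest : ∀ i, A (i + 1) ⊆ A i) (hAk : A k = ∅)
    (pv : ℕ → V → V)
    (hpv : ∀ i, i < k → ∀ v : V, (A i).Nonempty →
      pv i v ∈ A i ∧ ∀ a ∈ A i, gdist G w v (pv i v) ≤ gdist G w v a)
    (P : ∀ u v : V, G.Walk u v)
    (hP : ∀ u v i, u ∈ A i → u ∉ A (i + 1) → v ∈ halfBunch G w A pv k i u →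
      (P u v).IsPath ∧ wWeight w (P u v) = gdist G w u v)
    (Δ : ℝ) (hΔ : 5 < Δ) (x y : V) (Wxy : ℝ≥0∞)
    (hW : ∃ q : G.Walk x y, q.IsPath ∧ wWeight w q = gdist G w x y ∧ maxW w q = Wxy)
    (i : ℕ) (hi : i < k) (hAi : (A i).Nonempty)
    (hclose : gdist G w x y ≤ Wxy * ENNReal.ofReal (∑ j ∈ Finset.range (i + 1), Δ ^ j))
    (hpiv : gdist (spanGraph G w A pv k P) w x (pv i x) ≤
      ENNReal.ofReal (3 * Δ / (Δ - 5)) *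
        (Wxy * ENNReal.ofReal (∑ j ∈ Finset.range i, Δ ^ j))) :
    gdist (spanGraph G w A pv k P) w x y ≤
        ENNReal.ofReal (3 + 16 / (Δ - 5)) *
          max (ENNReal.ofReal Δ * (Wxy * ENNReal.ofReal (∑ j ∈ Finset.range i, Δ ^ j)))
            (gdist G w x y) ∨
      ((A (i + 1)).Nonempty ∧
        gdist (spanGraph G w A pv k P) w x (pv (i + 1) x) ≤
          ENNReal.ofReal (4 * Δ / (Δ - 5)) *
            (Wxy * ENNReal.ofReal (∑ j ∈ Finset.range (i + 1), Δ ^ j))) := by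
  classical
  set Hg := spanGraph G w A pv k P with hHg
  set D' := Wxy * ENNReal.ofReal (∑ j ∈ Finset.range i, Δ ^ j) with hD'
  set Di := Wxy * ENNReal.ofReal (∑ j ∈ Finset.range (i + 1), Δ ^ j) with hDi
  set C := ENNReal.ofReal (3 * Δ / (Δ - 5)) * D' with hC
  have hsymG : ∀ a b : V, gdist G w a b = gdist G w b a := fun a b => gdist_comm w hwsym a b
  have hsymH : ∀ a b : V, gdist Hg w a b = gdist Hg w b a :=
    fun a b => gdist_comm w (wsym_span hwsym) a b
  by_cases hx1 : x ∈ A (i + 1)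
  · -- x is itself in A (i+1): its pivot is at G-distance 0, hence at H-distance 0.
    have hne : (A (i + 1)).Nonempty := ⟨x, hx1⟩
    have hlt : i + 1 < k := nonempty_lt_k hAnest hAk hne
    obtain ⟨hpA, hpmin⟩ := hpv (i + 1) hlt x hne
    have hd0 : gdist G w x (pv (i + 1) x) = 0 :=
      le_antisymm (by simpa using hpmin x hx1) (zero_le)
    have hz := claimZ hwsym hk hA0 hAnest hAk hpv hP (k - (i + 1)) (i + 1) x (pv (i + 1) x)
      (by omega) hx1 hpA hd0
    exact Or.inr ⟨hne, by rw [hz]; exact zero_le⟩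
  · obtain ⟨lx, hlxA, hlx1, hlxmax⟩ := exists_lev hk hA0 hAnest hAk x
    have hlxi : lx ≤ i := by
      by_contra hcon
      exact hx1 (Amono hAnest (by omega) hlxA)
    obtain ⟨huA, humin⟩ := hpv i hi x hAi
    obtain ⟨lu, hluA, hlu1, hlumax⟩ := exists_lev hk hA0 hAnest hAk (pv i x)
    have hilu : i ≤ lu := hlumax i huA
    have hluk : lu < k := nonempty_lt_k hAnest hAk ⟨_, hluA⟩
    have hrC : gdist G w x (pv i x) ≤ C := (gdist_anti span_le w x _).trans hpiv
    set dxy := gdist G w x y with hdxy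
    -- the intermediate vertex ws in A lu close to y, reachable from y in H
    obtain ⟨ws, hwsA, hdyws, hHyws⟩ : ∃ ws, ws ∈ A lu ∧
        gdist G w y ws ≤ gdist G w y (pv i x) ∧ gdist Hg w y ws ≤ gdist G w y (pv i x) := by
      by_cases hyA : y ∈ A lu
      · exact ⟨y, hyA, by simp, by simp⟩
      · obtain ⟨ly, hlyA, hly1, hlymax⟩ := exists_lev hk hA0 hAnest hAk y
        have hly : ly < lu := by
          by_contra hcon
          exact hyA (Amono hAnest (by omega) hlyA)
        obtain ⟨hpA2, hpmin2⟩ := hpv lu hluk y ⟨_, hluA⟩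
        exact ⟨pv lu y, hpA2, hpmin2 _ hluA,
          (gdist_span_le hP hlyA hly1 (Or.inr ⟨lu, hly, hluk, ⟨_, hluA⟩, rfl⟩)).trans
            (hpmin2 _ hluA)⟩
    have hyu : gdist G w y (pv i x) ≤ dxy + C := by
      have h1 := gdist_triangle G w y x (pv i x)
      rw [hsymG y x] at h1
      exact h1.trans (add_le_add_right hrC _)
    have hduws : gdist G w (pv i x) ws ≤ (dxy + C) + (dxy + C) := by
      have h1 := gdist_triangle G w (pv i x) y ws
      rw [hsymG (pv i x) y] at h1
      exact h1.trans (add_le_add (hyu) ((hdyws).trans hyu))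
    by_cases hCc : ∀ a ∈ A (lu + 1), gdist G w (pv i x) ws < gdist G w (pv i x) a / 2
    · -- option (1)
      left
      have hmem : ws ∈ halfBunch G w A pv k lu (pv i x) := Or.inl ⟨hwsA, hCc⟩
      have hHuws : gdist Hg w (pv i x) ws ≤ (dxy + C) + (dxy + C) :=
        (gdist_span_le hP hluA hlu1 hmem).trans hduws
      have hchain : gdist Hg w x y ≤ 4 * C + 3 * dxy := by
        have T1 := gdist_triangle Hg w x (pv i x) y
        have T2 := gdist_triangle Hg w (pv i x) ws y
        have hWy : gdist Hg w ws y ≤ dxy + C := by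
          rw [hsymH ws y]
          exact hHyws.trans hyu
        calc gdist Hg w x y ≤ gdist Hg w x (pv i x) + (gdist Hg w (pv i x) ws +
              gdist Hg w ws y) := T1.trans (add_le_add_right T2 _)
          _ ≤ C + (((dxy + C) + (dxy + C)) + (dxy + C)) :=
              add_le_add hpiv (add_le_add hHuws hWy)
          _ = 4 * C + 3 * dxy := by ring
      exact hchain.trans (arith1 hΔ D' dxy)
    · -- option (2)
      right
      push_neg at hCc
      obtain ⟨a, ha, ha2⟩ := hCc
      have hua : gdist G w (pv i x) a ≤ gdist G w (pv i x) ws * 2 :=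
        (ENNReal.div_le_iff_le_mul (Or.inl two_ne_zero) (Or.inl ENNReal.ofNat_ne_top)).mp ha2
      have haA : a ∈ A (i + 1) := Amono hAnest (by omega) ha
      have hne : (A (i + 1)).Nonempty := ⟨a, haA⟩
      have hlt : i + 1 < k := nonempty_lt_k hAnest hAk hne
      obtain ⟨hp1A, hp1min⟩ := hpv (i + 1) hlt x hne
      have hmemx : pv (i + 1) x ∈ halfBunch G w A pv k lx x :=
        Or.inr ⟨i + 1, by omega, hlt, hne, rfl⟩
      refine ⟨hne, ?_⟩
      have hxa : gdist G w x a ≤ 5 * C + 4 * dxy := by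
        have h1 := gdist_triangle G w x (pv i x) a
        have h2 : gdist G w (pv i x) a ≤ ((dxy + C) + (dxy + C)) * 2 :=
          hua.trans (mul_le_mul_left hduws 2)
        calc gdist G w x a ≤ C + ((dxy + C) + (dxy + C)) * 2 :=
              h1.trans (add_le_add hrC h2)
          _ = 5 * C + 4 * dxy := by ring
      have hbound : gdist Hg w x (pv (i + 1) x) ≤ 5 * C + 4 * dxy :=
        ((gdist_span_le hP hlxA hlx1 hmemx).trans ((hp1min a haA).trans hxa))
      exact hbound.trans (arith2 hΔ (geom_step hΔ Wxy i) hclose)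

end ASP
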